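/- On a weak nearly Sasakian manifold M^{2n+1}(φ,Q,ξ,η,g) satisfying condition (4), one has g([X,Y], ξ) = 2 g((h-φ)Y, X) for all vector fields X, Y ∈ ker η; consequently the distribution ker η is integrable (i.e. [X,Y] ∈ ker η for all X, Y ∈ ker η) if and only if h = φ. -/

import Mathlib

/-- An abstract (Koszul-style) model of the algebra of smooth vector fields on a
`(2n+1)`-dimensional Riemannian manifold `M` carrying a weak nearly Sasakian
structure `(φ, Q, ξ, η, g)`: `VF` is the space of (smooth) vector fields, `fsmul`
is multiplication of a vector field by a smooth function `M → ℝ`, `lie` is the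
Lie bracket, `deriv X f` is the derivative of the function `f` in the direction of
the vector field `X`, `g` is the Riemannian metric, `cov` is its Levi-Civita
connection, and `frame` is an orthonormal frame (encoding that `dim M = 2n+1`).
The axioms are: `VF` is a module over functions, `deriv` is a derivation, `g` is a
symmetric positive definite function-bilinear form, `cov` is a torsion-free metric
connection, `φ` and `Q` are `(1,1)`-tensor fields with `Q` nonsingular, `η` is a
1-form, `φ² = -Q + η ⊗ ξ`, `η(ξ) = 1`, `Qξ = ξ`, `ker η` is `φ`-invariant,
`g(φX, φY) = g(X, QY) - η(X)η(Y)`, and the nearly Sasakian condition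
`(∇_Y φ)Y = g(Y,Y) ξ - η(Y) Y`. -/
structure WeakNearlySasakianManifold (M : Type*) (n : ℕ) where
  VF : Type*
  [instAddCommGroup : AddCommGroup VF]
  [instModule : Module ℝ VF]
  fsmul : (M → ℝ) → VF → VF
  lie : VF → VF → VF
  deriv : VF → (M → ℝ) → M → ℝ
  g : VF → VF → M → ℝ
  cov : VF → VF → VF
  phi : VF → VF
  Q : VF → VF
  xi : VF
  eta : VF → M → ℝ
  frame : Fin (2 * n + 1) → VF
  npos : 1 ≤ n
  -- `fsmul` makes `VF` a module over the smooth functions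
  fsmul_one : ∀ X, fsmul 1 X = X
  fsmul_add : ∀ f X Y, fsmul f (X + Y) = fsmul f X + fsmul f Y
  add_fsmul : ∀ f₁ f₂ X, fsmul (f₁ + f₂) X = fsmul f₁ X + fsmul f₂ X
  mul_fsmul : ∀ f₁ f₂ X, fsmul (f₁ * f₂) X = fsmul f₁ (fsmul f₂ X)
  fsmul_const : ∀ (c : ℝ) X, fsmul (fun _ => c) X = c • X
  -- `deriv` is a derivation in the function, tensorial in the vector field
  deriv_add : ∀ X f₁ f₂, deriv X (f₁ + f₂) = deriv X f₁ + deriv X f₂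
  deriv_mul : ∀ X f₁ f₂, deriv X (f₁ * f₂) = f₁ * deriv X f₂ + f₂ * deriv X f₁
  deriv_const : ∀ X (c : ℝ), deriv X (fun _ => c) = 0
  deriv_add_vf : ∀ X Y f, deriv (X + Y) f = deriv X f + deriv Y f
  deriv_fsmul : ∀ f X k, deriv (fsmul f X) k = f * deriv X k
  -- the Lie bracket
  lie_antisymm : ∀ X Y, lie X Y = -lie Y X
  lie_add_right : ∀ X Y Z, lie X (Y + Z) = lie X Y + lie X Z
  lie_leibniz : ∀ X f Y, lie X (fsmul f Y) = fsmul f (lie X Y) + fsmul (deriv X f) Y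
  -- the Riemannian metric
  g_symm : ∀ X Y, g X Y = g Y X
  g_add_left : ∀ X Y Z, g (X + Y) Z = g X Z + g Y Z
  g_fsmul_left : ∀ f X Y, g (fsmul f X) Y = f * g X Y
  g_nonneg : ∀ X p, 0 ≤ g X X p
  g_nondegenerate : ∀ X, g X X = 0 → X = 0
  -- the Levi-Civita connection
  cov_add_left : ∀ X Y Z, cov (X + Y) Z = cov X Z + cov Y Z
  cov_add_right : ∀ X Y Z, cov X (Y + Z) = cov X Y + cov X Z
  cov_fsmul_left : ∀ f X Y, cov (fsmul f X) Y = fsmul f (cov X Y)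
  cov_leibniz : ∀ f X Y, cov X (fsmul f Y) = fsmul f (cov X Y) + fsmul (deriv X f) Y
  cov_torsion_free : ∀ X Y, cov X Y - cov Y X = lie X Y
  cov_metric : ∀ X Y Z, deriv X (g Y Z) = g (cov X Y) Z + g Y (cov X Z)
  -- `φ`, `Q` are `(1,1)`-tensor fields, `Q` nonsingular, `η` is a 1-form
  phi_add : ∀ X Y, phi (X + Y) = phi X + phi Y
  phi_fsmul : ∀ f X, phi (fsmul f X) = fsmul f (phi X)
  Q_add : ∀ X Y, Q (X + Y) = Q X + Q Y
  Q_fsmul : ∀ f X, Q (fsmul f X) = fsmul f (Q X)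
  Q_bijective : Function.Bijective Q
  eta_add : ∀ X Y, eta (X + Y) = eta X + eta Y
  eta_fsmul : ∀ f X, eta (fsmul f X) = f * eta X
  -- the weak almost contact metric conditions
  phi_phi : ∀ X, phi (phi X) = -Q X + fsmul (eta X) xi
  eta_xi : eta xi = 1
  Q_xi : Q xi = xi
  phi_invariant : ∀ X, eta X = 0 → eta (phi X) = 0
  metric_compat : ∀ X Y, g (phi X) (phi Y) = g X (Q Y) - eta X * eta Y
  -- an orthonormal frame: `M` has dimension `2 * n + 1`
  frame_orthonormal : ∀ i j, g (frame i) (frame j) = fun _ => if i = j then (1 : ℝ) else 0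
  frame_spanning : ∀ X, ∃ c : Fin (2 * n + 1) → M → ℝ, X = ∑ i, fsmul (c i) (frame i)
  -- the weak nearly Sasakian condition `(∇_Y φ)Y = g(Y,Y) ξ - η(Y) Y`
  nearlySasakian : ∀ Y, cov Y (phi Y) - phi (cov Y Y) = fsmul (g Y Y) xi - fsmul (eta Y) Y

attribute [instance] WeakNearlySasakianManifold.instAddCommGroup
attribute [instance] WeakNearlySasakianManifold.instModule

namespace WeakNearlySasakianManifold

variable {M : Type*} {n : ℕ} (S : WeakNearlySasakianManifold M n)

/-- `(∇_X φ) Y` -/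
def covPhi (X Y : S.VF) : S.VF := S.cov X (S.phi Y) - S.phi (S.cov X Y)

/-- the tensor `Q̃ = Q - id` -/
def Qt (X : S.VF) : S.VF := S.Q X - X

/-- `(∇_X Q̃) Y` -/
def covQt (X Y : S.VF) : S.VF := S.cov X (S.Qt Y) - S.Qt (S.cov X Y)

/-- the tensor `h = ∇ξ + φ` -/
def h (X : S.VF) : S.VF := S.cov X S.xi + S.phi X

/-- `(∇_X h) Y` -/
def covh (X Y : S.VF) : S.VF := S.cov X (S.h Y) - S.h (S.cov X Y)

/-- the tensor `(h - φ)` -/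
def hmphi (X : S.VF) : S.VF := S.h X - S.phi X

/-- `(∇_X (h - φ)) Y` -/
def covhmphi (X Y : S.VF) : S.VF := S.cov X (S.hmphi Y) - S.hmphi (S.cov X Y)

/-- the Riemann curvature tensor `R_{X,Y} Z = ∇_X ∇_Y Z - ∇_Y ∇_X Z - ∇_{[X,Y]} Z` -/
def R (X Y Z : S.VF) : S.VF :=
  S.cov X (S.cov Y Z) - S.cov Y (S.cov X Z) - S.cov (S.lie X Y) Z

/-- Condition (4): `(∇_X Q̃) Y = 0` for every vector field `X` and every `Y ∈ ker η`. -/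
def Cond4 : Prop := ∀ X Y : S.VF, S.eta Y = 0 → S.covQt X Y = 0

/-- Condition (5): `R_{Q̃X, Y} Z ∈ ker η` for every vector field `X` and all `Y, Z ∈ ker η`. -/
def Cond5 : Prop :=
  ∀ X Y Z : S.VF, S.eta Y = 0 → S.eta Z = 0 → S.eta (S.R (S.Qt X) Y Z) = 0

/-- the trace of a `(1,1)`-tensor field -/
def trace (A : S.VF → S.VF) : M → ℝ := ∑ i, S.g (A (S.frame i)) (S.frame i)

/-- the Ricci tensor `Ric(X,Y) = Σᵢ g(R_{Eᵢ,X} Y, Eᵢ)` -/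
def Ric (X Y : S.VF) : M → ℝ := ∑ i, S.g (S.R (S.frame i) X Y) (S.frame i)

end WeakNearlySasakianManifold

namespace WeakNearlySasakianManifold

section Aux

variable {M : Type*} {n : ℕ} (S : WeakNearlySasakianManifold M n)

section AddHom
variable {A B : Type*} [AddCommGroup A] [AddCommGroup B]

private lemma m0 (F : A → B) (hF : ∀ x y, F (x + y) = F x + F y) : F 0 = 0 := by
  have h := hF 0 0
  rw [add_zero] at h
  exact right_eq_add.mp h

private lemma mneg (F : A → B) (hF : ∀ x y, F (x + y) = F x + F y) (x : A) :
    F (-x) = -F x := by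
  have h := hF x (-x)
  rw [add_neg_cancel, m0 F hF] at h
  have h2 : F x + F (-x) = 0 := h.symm
  exact eq_neg_of_add_eq_zero_right h2

private lemma msub (F : A → B) (hF : ∀ x y, F (x + y) = F x + F y) (x y : A) :
    F (x - y) = F x - F y := by
  rw [sub_eq_add_neg, hF, mneg F hF, sub_eq_add_neg]

end AddHom

private lemma fsmul_zerof (X : S.VF) : S.fsmul 0 X = 0 :=
  m0 (fun f => S.fsmul f X) (fun a b => S.add_fsmul a b X)

private lemma fsmul_zerov (f : M → ℝ) : S.fsmul f 0 = 0 :=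
  m0 (S.fsmul f) (S.fsmul_add f)

private lemma phi_zero : S.phi 0 = 0 := m0 S.phi S.phi_add
private lemma phi_neg (X : S.VF) : S.phi (-X) = -S.phi X := mneg S.phi S.phi_add X
private lemma phi_sub (X Y : S.VF) : S.phi (X - Y) = S.phi X - S.phi Y := msub S.phi S.phi_add X Y

private lemma Q_zero : S.Q 0 = 0 := m0 S.Q S.Q_add

private lemma eta_zero : S.eta 0 = 0 := m0 S.eta S.eta_add
private lemma eta_sub (X Y : S.VF) : S.eta (X - Y) = S.eta X - S.eta Y := msub S.eta S.eta_add X Y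

private lemma g_zerol (Y : S.VF) : S.g 0 Y = 0 :=
  m0 (fun X => S.g X Y) (fun a b => S.g_add_left a b Y)
private lemma g_negl (X Y : S.VF) : S.g (-X) Y = -S.g X Y :=
  mneg (fun X => S.g X Y) (fun a b => S.g_add_left a b Y) X
private lemma g_subl (X Y Z : S.VF) : S.g (X - Y) Z = S.g X Z - S.g Y Z :=
  msub (fun X => S.g X Z) (fun a b => S.g_add_left a b Z) X Y

private lemma g_addr (X Y Z : S.VF) : S.g X (Y + Z) = S.g X Y + S.g X Z := by
  rw [S.g_symm, S.g_add_left, S.g_symm Y X, S.g_symm Z X]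
private lemma g_zeror (X : S.VF) : S.g X 0 = 0 :=
  m0 (S.g X) (g_addr S X)
private lemma g_negr (X Y : S.VF) : S.g X (-Y) = -S.g X Y :=
  mneg (S.g X) (g_addr S X) Y
private lemma g_subr (X Y Z : S.VF) : S.g X (Y - Z) = S.g X Y - S.g X Z :=
  msub (S.g X) (g_addr S X) Y Z
private lemma g_smulr (f : M → ℝ) (X Y : S.VF) : S.g X (S.fsmul f Y) = f * S.g X Y := by
  rw [S.g_symm, S.g_fsmul_left, S.g_symm Y X]

private lemma cov_zeror (X : S.VF) : S.cov X 0 = 0 := m0 (S.cov X) (S.cov_add_right X)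
private lemma cov_negr (X Y : S.VF) : S.cov X (-Y) = -S.cov X Y :=
  mneg (S.cov X) (S.cov_add_right X) Y
private lemma cov_subr (X Y Z : S.VF) : S.cov X (Y - Z) = S.cov X Y - S.cov X Z :=
  msub (S.cov X) (S.cov_add_right X) Y Z

private lemma Q_inj : Function.Injective S.Q := S.Q_bijective.1

private lemma phi_xi : S.phi S.xi = 0 := by
  have h1 : S.phi (S.phi S.xi) = 0 := by
    rw [S.phi_phi, S.eta_xi, S.Q_xi, S.fsmul_one]
    abel
  set c := S.eta (S.phi S.xi) with hc
  have h2 : S.Q (S.phi S.xi) = S.fsmul c S.xi := by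
    have h := S.phi_phi (S.phi S.xi)
    rw [h1, phi_zero, ← hc] at h
    have h' : -(S.Q (S.phi S.xi)) + S.fsmul c S.xi = 0 := h.symm
    have h'' := eq_neg_of_add_eq_zero_left h'
    exact neg_inj.mp h''
  have h3 : S.phi S.xi = S.fsmul c S.xi := by
    apply Q_inj S
    rw [h2, S.Q_fsmul, S.Q_xi]
  have h4 : S.fsmul (c * c) S.xi = 0 := by
    calc S.fsmul (c * c) S.xi = S.fsmul c (S.fsmul c S.xi) := S.mul_fsmul c c S.xi
    _ = S.fsmul c (S.phi S.xi) := by rw [← h3]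
    _ = S.phi (S.fsmul c S.xi) := (S.phi_fsmul c S.xi).symm
    _ = S.phi (S.phi S.xi) := by rw [← h3]
    _ = 0 := h1
  have h5 : c * c = 0 := by
    have h := congrArg S.eta h4
    rw [S.eta_fsmul, S.eta_xi, mul_one, eta_zero] at h
    exact h
  have h6 : c = 0 := by
    funext p
    have := congrFun h5 p
    simp only [Pi.mul_apply, Pi.zero_apply] at this ⊢
    exact mul_self_eq_zero.mp this
  rw [h3, h6, fsmul_zerof]

private lemma g_xi (X : S.VF) : S.g X S.xi = S.eta X := by
  have h := S.metric_compat X S.xi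
  rw [phi_xi, g_zeror, S.Q_xi, S.eta_xi, mul_one] at h
  have := sub_eq_zero.mp h.symm
  exact this

private lemma eta_phi (X : S.VF) : S.eta (S.phi X) = 0 := by
  have hX0 : S.eta (X - S.fsmul (S.eta X) S.xi) = 0 := by
    rw [eta_sub, S.eta_fsmul, S.eta_xi, mul_one, sub_self]
  have h := S.phi_invariant _ hX0
  rw [phi_sub, S.phi_fsmul, phi_xi, fsmul_zerov, sub_zero] at h
  exact h

private lemma Q_selfadj (X Y : S.VF) : S.g (S.Q X) Y = S.g X (S.Q Y) := by
  have h1 := S.metric_compat X Y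
  have h2 := S.metric_compat Y X
  rw [S.g_symm (S.phi Y) (S.phi X)] at h2
  have h3 : S.g X (S.Q Y) - S.eta X * S.eta Y = S.g Y (S.Q X) - S.eta Y * S.eta X := by
    rw [← h1, ← h2]
  rw [S.g_symm (S.Q X) Y]
  funext p
  have hp := congrFun h3 p
  have hm : S.eta X p * S.eta Y p = S.eta Y p * S.eta X p := mul_comm _ _
  simp only [Pi.sub_apply, Pi.mul_apply] at hp
  linarith

private lemma Qphi (X : S.VF) : S.Q (S.phi X) = S.phi (S.Q X) := by
  have h1 := congrArg S.phi (S.phi_phi X)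
  have h2 := S.phi_phi (S.phi X)
  rw [eta_phi, fsmul_zerof, add_zero] at h2
  rw [h2] at h1
  rw [S.phi_add, phi_neg, S.phi_fsmul, phi_xi, fsmul_zerov, add_zero] at h1
  exact neg_inj.mp h1

private lemma phi_skew (X Y : S.VF) : S.g (S.phi X) Y = -S.g X (S.phi Y) := by
  obtain ⟨Z, hZ⟩ := S.Q_bijective.2 Y
  have h1 := S.metric_compat X (S.phi Z)
  rw [eta_phi, mul_zero, sub_zero, Qphi] at h1
  rw [S.phi_phi Z, g_addr, g_negr, g_smulr, g_xi, eta_phi, mul_zero, add_zero] at h1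
  rw [← hZ]
  rw [← h1, neg_neg]

private lemma Qt_xi : S.Qt S.xi = 0 := by
  simp only [Qt]
  rw [S.Q_xi, sub_self]

private lemma Qt_selfadj (X Y : S.VF) : S.g (S.Qt X) Y = S.g X (S.Qt Y) := by
  simp only [Qt]
  rw [g_subl, g_subr, Q_selfadj]

private lemma deriv_zero (X : S.VF) : S.deriv X (0 : M → ℝ) = 0 := S.deriv_const X 0
private lemma deriv_one (X : S.VF) : S.deriv X (1 : M → ℝ) = 0 := S.deriv_const X 1

private lemma g_xixi : S.g S.xi S.xi = 1 := by rw [g_xi, S.eta_xi]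

private lemma eta_cov_xi (X : S.VF) : S.eta (S.cov X S.xi) = 0 := by
  have h := S.cov_metric X S.xi S.xi
  rw [g_xixi, deriv_one, S.g_symm S.xi (S.cov X S.xi)] at h
  rw [← g_xi]
  funext p
  have hp := congrFun h p
  simp only [Pi.add_apply, Pi.zero_apply] at hp ⊢
  linarith

private lemma g_cov_xi_of (X Y : S.VF) (hY : S.eta Y = 0) :
    S.g (S.cov X Y) S.xi = -S.g Y (S.cov X S.xi) := by
  have h := S.cov_metric X Y S.xi
  rw [g_xi S Y, hY, deriv_zero] at h
  funext p
  have hp := congrFun h p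
  simp only [Pi.add_apply, Pi.zero_apply, Pi.neg_apply] at hp ⊢
  linarith

private lemma g_covPhi_xi (X Y : S.VF) :
    S.g (S.covPhi X Y) S.xi = -S.g (S.phi Y) (S.cov X S.xi) := by
  simp only [covPhi]
  rw [g_subl, g_cov_xi_of S X (S.phi Y) (eta_phi S Y), g_xi, eta_phi, sub_zero]

private lemma ns_polar (X Y : S.VF) : S.covPhi X Y + S.covPhi Y X =
    S.fsmul (S.g X Y) S.xi + S.fsmul (S.g Y X) S.xi
      - S.fsmul (S.eta X) Y - S.fsmul (S.eta Y) X := by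
  have hXY := S.nearlySasakian (X + Y)
  have hX := S.nearlySasakian X
  have hY := S.nearlySasakian Y
  have e : S.covPhi X Y + S.covPhi Y X =
      (S.cov (X + Y) (S.phi (X + Y)) - S.phi (S.cov (X + Y) (X + Y)))
      - (S.cov X (S.phi X) - S.phi (S.cov X X))
      - (S.cov Y (S.phi Y) - S.phi (S.cov Y Y)) := by
    simp only [covPhi, S.phi_add, S.cov_add_left, S.cov_add_right]
    abel
  rw [hXY, hX, hY] at e
  rw [e]
  simp only [S.eta_add, S.g_add_left, g_addr, S.add_fsmul, S.fsmul_add]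
  abel

private lemma star (X Y : S.VF) :
    S.g (S.phi Y) (S.cov X S.xi) + S.g (S.phi X) (S.cov Y S.xi)
    = S.eta X * S.eta Y + S.eta Y * S.eta X - S.g X Y - S.g Y X := by
  have h := congrArg (fun Z => S.g Z S.xi) (ns_polar S X Y)
  simp only [S.g_add_left, g_subl] at h
  rw [g_covPhi_xi S X Y, g_covPhi_xi S Y X] at h
  simp only [S.g_fsmul_left] at h
  rw [g_xixi S, g_xi S Y, g_xi S X] at h
  simp only [mul_one] at h
  funext p
  have hp := congrFun h p
  simp only [Pi.add_apply, Pi.sub_apply, Pi.neg_apply, Pi.mul_apply] at hp ⊢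
  linarith

private lemma star0 (X Y : S.VF) (hX : S.eta X = 0) (hY : S.eta Y = 0) :
    S.g (S.phi Y) (S.cov X S.xi) + S.g (S.phi X) (S.cov Y S.xi)
    = -S.g X Y - S.g Y X := by
  have h := star S X Y
  rw [hX, hY] at h
  funext p
  have hp := congrFun h p
  simp only [Pi.add_apply, Pi.sub_apply, Pi.neg_apply, Pi.mul_apply, Pi.zero_apply,
    mul_zero, zero_mul] at hp ⊢
  linarith

private lemma cov_xi_xi : S.cov S.xi S.xi = 0 := by
  have h := S.nearlySasakian S.xi
  rw [g_xixi S, S.eta_xi, S.fsmul_one, sub_self, phi_xi S, cov_zeror S, zero_sub] at h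
  have h1 : S.phi (S.cov S.xi S.xi) = 0 := neg_eq_zero.mp h
  have h2 : S.phi (S.phi (S.cov S.xi S.xi)) = 0 := by rw [h1, phi_zero]
  rw [S.phi_phi, eta_cov_xi S, fsmul_zerof, add_zero] at h2
  apply Q_inj S
  rw [Q_zero]
  exact neg_eq_zero.mp h2

private lemma eta_cov_xi_left (X : S.VF) (hX : S.eta X = 0) : S.eta (S.cov S.xi X) = 0 := by
  have h := S.cov_metric S.xi X S.xi
  rw [g_xi S X, hX, deriv_zero, cov_xi_xi, g_zeror, add_zero] at h
  rw [← g_xi]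
  exact h.symm

private lemma covQt_selfadj (X Y Z : S.VF) : S.g (S.covQt X Y) Z = S.g Y (S.covQt X Z) := by
  simp only [covQt]
  rw [g_subl, g_subr]
  have h1 := S.cov_metric X (S.Qt Y) Z
  have h2 := S.cov_metric X Y (S.Qt Z)
  have h3 : S.g (S.Qt Y) Z = S.g Y (S.Qt Z) := Qt_selfadj S Y Z
  rw [h3] at h1
  have h4 : S.g (S.Qt (S.cov X Y)) Z = S.g (S.cov X Y) (S.Qt Z) := Qt_selfadj S _ Z
  have h5 : S.g (S.Qt Y) (S.cov X Z) = S.g Y (S.Qt (S.cov X Z)) := Qt_selfadj S _ _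
  funext p
  have e1 := congrFun h1 p
  have e2 := congrFun h2 p
  have e4 := congrFun h4 p
  have e5 := congrFun h5 p
  simp only [Pi.add_apply, Pi.sub_apply] at e1 e2 e4 e5 ⊢
  linarith

private lemma Qt_cov_xi (h4 : S.Cond4) (X : S.VF) : S.Qt (S.cov X S.xi) = 0 := by
  have hWeta : S.eta (S.Qt (S.cov X S.xi)) = 0 := by
    rw [← g_xi, Qt_selfadj, Qt_xi, g_zeror]
  have hcovQtxi : S.covQt X S.xi = -S.Qt (S.cov X S.xi) := by
    simp only [covQt]
    rw [Qt_xi, cov_zeror, zero_sub]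
  have hperp : S.g (S.Qt (S.cov X S.xi)) (S.Qt (S.cov X S.xi)) = 0 := by
    have h5 := covQt_selfadj S X S.xi (S.Qt (S.cov X S.xi))
    rw [hcovQtxi, h4 X _ hWeta, g_zeror, g_negl, neg_eq_zero] at h5
    exact h5
  exact S.g_nondegenerate _ hperp

private lemma covQ_comm (h4 : S.Cond4) (Z X : S.VF) (hX : S.eta X = 0) :
    S.cov Z (S.Q X) = S.Q (S.cov Z X) := by
  have h := h4 Z X hX
  simp only [covQt, Qt] at h
  rw [cov_subr] at h
  have h2 := sub_eq_zero.mp h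
  have h3 : S.cov Z (S.Q X) - S.cov Z X - (S.Q (S.cov Z X) - S.cov Z X) = 0 := by
    rw [h2]; abel
  have h4' : S.cov Z (S.Q X) - S.Q (S.cov Z X) = 0 := by rw [← h3]; abel
  exact sub_eq_zero.mp h4'

private lemma Hxi (X : S.VF) :
    S.covPhi S.xi X = S.phi (S.cov X S.xi) + S.fsmul (S.eta X) S.xi - X := by
  have h := ns_polar S X S.xi
  rw [S.g_symm S.xi X, g_xi, S.eta_xi, S.fsmul_one] at h
  have hc : S.covPhi X S.xi = -S.phi (S.cov X S.xi) := by
    simp only [covPhi]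
    rw [phi_xi, cov_zeror, zero_sub]
  rw [hc] at h
  have h2 : S.covPhi S.xi X
      = (-S.phi (S.cov X S.xi) + S.covPhi S.xi X) + S.phi (S.cov X S.xi) := by abel
  rw [h2, h]
  abel

private lemma Hxi0 (X : S.VF) (hX : S.eta X = 0) :
    S.covPhi S.xi X = S.phi (S.cov X S.xi) - X := by
  rw [Hxi, hX, fsmul_zerof, add_zero]

private lemma Jxi (h4 : S.Cond4) (X : S.VF) (hX : S.eta X = 0) :
    S.covPhi S.xi (S.phi X) + S.phi (S.covPhi S.xi X) = 0 := by
  have hA : S.eta (S.cov S.xi X) = 0 := eta_cov_xi_left S X hX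
  have r1 : S.cov S.xi (S.phi (S.phi X)) =
      S.covPhi S.xi (S.phi X) + S.phi (S.covPhi S.xi X) + S.phi (S.phi (S.cov S.xi X)) := by
    simp only [covPhi]
    rw [phi_sub]
    abel
  have r2 : S.cov S.xi (S.phi (S.phi X)) = -S.Q (S.cov S.xi X) := by
    rw [S.phi_phi X, hX, fsmul_zerof, add_zero, cov_negr, covQ_comm S h4 S.xi X hX]
  have r3 : S.phi (S.phi (S.cov S.xi X)) = -S.Q (S.cov S.xi X) := by
    rw [S.phi_phi, hA, fsmul_zerof, add_zero]
  have comb : S.covPhi S.xi (S.phi X) + S.phi (S.covPhi S.xi X)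
      = S.cov S.xi (S.phi (S.phi X)) - S.phi (S.phi (S.cov S.xi X)) := by
    rw [r1]; abel
  rw [comb, r2, r3]
  abel

private lemma lemK (h4 : S.Cond4) (X : S.VF) (hX : S.eta X = 0) :
    S.phi (S.cov (S.phi X) S.xi) = S.Q (S.cov X S.xi) + S.phi X + S.phi X := by
  have j := Jxi S h4 X hX
  have hA : S.eta (S.cov X S.xi) = 0 := eta_cov_xi S X
  have e1 : S.covPhi S.xi (S.phi X) = S.phi (S.cov (S.phi X) S.xi) - S.phi X :=
    Hxi0 S (S.phi X) (eta_phi S X)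
  have e2 : S.phi (S.covPhi S.xi X) = -S.Q (S.cov X S.xi) - S.phi X := by
    rw [Hxi0 S X hX, phi_sub, S.phi_phi, hA, fsmul_zerof, add_zero]
  rw [e1, e2] at j
  have h2 : S.phi (S.cov (S.phi X) S.xi)
      = ((S.phi (S.cov (S.phi X) S.xi) - S.phi X) + (-S.Q (S.cov X S.xi) - S.phi X))
        + (S.Q (S.cov X S.xi) + S.phi X + S.phi X) := by abel
  rw [h2, j, zero_add]

private lemma three (h4 : S.Cond4) (X Y : S.VF) (hX : S.eta X = 0) (hY : S.eta Y = 0) :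
    S.g (S.Q (S.cov X S.xi)) Y + S.g (S.Q (S.cov Y S.xi)) X = 0 := by
  have k := lemK S h4 X hX
  have e1 := congrArg (fun Z => S.g Z Y) k
  simp only [S.g_add_left] at e1
  have e2 : S.g (S.phi (S.cov (S.phi X) S.xi)) Y
      = -S.g (S.cov (S.phi X) S.xi) (S.phi Y) := phi_skew S _ Y
  have e3 := star0 S (S.phi X) Y (eta_phi S X) hY
  have e4 : S.g (S.phi (S.phi X)) (S.cov Y S.xi) = -S.g (S.Q X) (S.cov Y S.xi) := by
    rw [S.phi_phi, hX, fsmul_zerof, add_zero, g_negl]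
  have e5 : S.g (S.phi Y) (S.cov (S.phi X) S.xi)
      = S.g (S.cov (S.phi X) S.xi) (S.phi Y) := S.g_symm _ _
  have e6 : S.g Y (S.phi X) = S.g (S.phi X) Y := S.g_symm _ _
  have e7 : S.g (S.Q X) (S.cov Y S.xi) = S.g (S.Q (S.cov Y S.xi)) X := by
    rw [Q_selfadj, S.g_symm]
  funext p
  have p1 := congrFun e1 p
  have p2 := congrFun e2 p
  have p3 := congrFun e3 p
  have p4 := congrFun e4 p
  have p5 := congrFun e5 p
  have p6 := congrFun e6 p
  have p7 := congrFun e7 p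
  simp only [Pi.add_apply, Pi.sub_apply, Pi.neg_apply, Pi.zero_apply] at p1 p2 p3 p4 p5 p6 p7 ⊢
  linarith

private lemma A_skew (h4 : S.Cond4) (X Y : S.VF) (hX : S.eta X = 0) (hY : S.eta Y = 0) :
    S.g (S.cov X S.xi) Y + S.g (S.cov Y S.xi) X = 0 := by
  have hQX : S.Q (S.cov X S.xi) = S.cov X S.xi := by
    have h := Qt_cov_xi S h4 X
    simp only [Qt] at h
    exact sub_eq_zero.mp h
  have hQY : S.Q (S.cov Y S.xi) = S.cov Y S.xi := by
    have h := Qt_cov_xi S h4 Y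
    simp only [Qt] at h
    exact sub_eq_zero.mp h
  have h := three S h4 X Y hX hY
  rw [hQX, hQY] at h
  exact h

private lemma hmphi_eq (Y : S.VF) : S.hmphi Y = S.cov Y S.xi := by
  simp only [hmphi, WeakNearlySasakianManifold.h]
  abel

private lemma part1 (h4 : S.Cond4) (X Y : S.VF) (hX : S.eta X = 0) (hY : S.eta Y = 0) :
    S.g (S.lie X Y) S.xi = (2 : ℝ) • S.g (S.hmphi Y) X := by
  have htf := S.cov_torsion_free X Y
  have e0 : S.g (S.lie X Y) S.xi = S.g (S.cov X Y) S.xi - S.g (S.cov Y X) S.xi := by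
    rw [← htf, g_subl]
  rw [e0, g_cov_xi_of S X Y hY, g_cov_xi_of S Y X hX, hmphi_eq]
  have hs := A_skew S h4 X Y hX hY
  funext p
  have p1 := congrFun hs p
  have p2 := congrFun (S.g_symm Y (S.cov X S.xi)) p
  have p3 := congrFun (S.g_symm X (S.cov Y S.xi)) p
  have p4 := congrFun (S.g_symm (S.cov Y S.xi) X) p
  simp only [Pi.add_apply, Pi.sub_apply, Pi.neg_apply, Pi.zero_apply, Pi.smul_apply,
    smul_eq_mul] at p1 p2 p3 p4 ⊢
  linarith

end Aux

/-- On a weak nearly Sasakian manifold satisfying condition (4),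
`g([X,Y], ξ) = 2 g((h-φ)Y, X)` for all `X, Y ∈ ker η`; consequently `ker η` is
integrable if and only if `h = φ`. -/
theorem ker_eta_integrable_iff_h_eq_phi {M : Type*} {n : ℕ}
    (S : WeakNearlySasakianManifold M n) (h4 : S.Cond4) :
    (∀ X Y : S.VF, S.eta X = 0 → S.eta Y = 0 →
      S.g (S.lie X Y) S.xi = (2 : ℝ) • S.g (S.hmphi Y) X) ∧
    ((∀ X Y : S.VF, S.eta X = 0 → S.eta Y = 0 → S.eta (S.lie X Y) = 0) ↔
      (∀ X : S.VF, S.h X = S.phi X)) := by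
  constructor
  · exact fun X Y hX hY => part1 S h4 X Y hX hY
  · constructor
    · intro hint X
      have hker : ∀ Y : S.VF, S.eta Y = 0 → S.cov Y S.xi = 0 := by
        intro Y hY
        have hAY : S.eta (S.cov Y S.xi) = 0 := eta_cov_xi S Y
        have h1 := part1 S h4 (S.cov Y S.xi) Y hAY hY
        have h2 : S.eta (S.lie (S.cov Y S.xi) Y) = 0 := hint _ _ hAY hY
        rw [← g_xi] at h2
        rw [h2, hmphi_eq] at h1
        apply S.g_nondegenerate
        funext p
        have hp := congrFun h1 p
        simp only [Pi.smul_apply, Pi.zero_apply, smul_eq_mul] at hp ⊢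
        linarith
      have hX0 : S.eta (X - S.fsmul (S.eta X) S.xi) = 0 := by
        rw [eta_sub, S.eta_fsmul, S.eta_xi, mul_one, sub_self]
      have hdecomp : X = (X - S.fsmul (S.eta X) S.xi) + S.fsmul (S.eta X) S.xi := by abel
      have hcov : S.cov X S.xi = 0 := by
        conv_lhs => rw [hdecomp]
        rw [S.cov_add_left, hker _ hX0, S.cov_fsmul_left, cov_xi_xi S, fsmul_zerov, zero_add]
      simp only [WeakNearlySasakianManifold.h]
      rw [hcov, zero_add]
    · intro hall X Y hX hY
      have hc : S.cov Y S.xi = 0 := by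
        have hy := hall Y
        simp only [WeakNearlySasakianManifold.h] at hy
        have : S.cov Y S.xi + S.phi Y - S.phi Y = S.phi Y - S.phi Y := by rw [hy]
        rw [add_sub_cancel_right, sub_self] at this
        exact this
      rw [← g_xi, part1 S h4 X Y hX hY, hmphi_eq, hc, g_zerol, smul_zero]


end WeakNearlySasakianManifold
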